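/- Let u : ℝ → ℝ be continuous, differentiable at 0, and satisfy u(z)² = z²(1 + z²) for all z ∈ ℝ. Then u(1)·u(−1) < 0, i.e. u takes opposite signs at z = 1 and z = −1. (Consequently, the only differentiable square roots of z²(1+z²) near 0 are u(z) = z·√(1+z²) and u(z) = −z·√(1+z²), both of which change sign at 0.) -/

import Mathlib

/-- Any continuous square root of `z²(1+z²)` which is differentiable at `0`
takes opposite signs at `z = 1` and `z = -1`. -/
theorem sqrt_of_z_sq_one_add_z_sq_changes_sign (u : ℝ → ℝ)
    (hcont : Continuous u) (hdiff : DifferentiableAt ℝ u 0)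
    (hsq : ∀ z : ℝ, (u z) ^ 2 = z ^ 2 * (1 + z ^ 2)) :
    u 1 * u (-1) < 0 := by
  have hu0 : u 0 = 0 := by simpa using hsq 0
  set L := deriv u 0 with hL
  have hslope : Filter.Tendsto (fun z : ℝ => u z / z) (nhdsWithin 0 {(0:ℝ)}ᶜ) (nhds L) := by
    have h := hdiff.hasDerivAt
    rw [hasDerivAt_iff_tendsto_slope] at h
    exact h.congr (fun z => by simp [slope, hu0, div_eq_inv_mul])
  -- L^2 = 1
  have hLsq : L ^ 2 = 1 := by
    have h1 : Filter.Tendsto (fun z : ℝ => (u z / z) ^ 2) (nhdsWithin 0 {(0:ℝ)}ᶜ)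
        (nhds (L ^ 2)) := hslope.pow 2
    have h2 : Filter.Tendsto (fun z : ℝ => (u z / z) ^ 2) (nhdsWithin 0 {(0:ℝ)}ᶜ)
        (nhds 1) := by
      have heq : ∀ᶠ z in nhdsWithin (0:ℝ) {(0:ℝ)}ᶜ, (1 : ℝ) + z ^ 2 = (u z / z) ^ 2 := by
        filter_upwards [self_mem_nhdsWithin] with z hz
        have hz' : z ≠ 0 := hz
        field_simp
        rw [hsq z]
      have h3 : Filter.Tendsto (fun z : ℝ => (1:ℝ) + z ^ 2) (nhdsWithin 0 {(0:ℝ)}ᶜ)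
          (nhds 1) := by
        have hc2 : Filter.Tendsto (fun z : ℝ => (1:ℝ) + z ^ 2) (nhds 0) (nhds 1) := by
          have h := ((continuous_const (y := (1:ℝ))).add (continuous_pow 2)).tendsto (0:ℝ)
          simpa [Pi.add_def] using h
        exact hc2.mono_left nhdsWithin_le_nhds
      exact h3.congr' heq
    exact tendsto_nhds_unique h1 h2
  -- slope of u(-z)
  have hneg : Filter.Tendsto (fun z : ℝ => -z) (nhdsWithin (0:ℝ) {(0:ℝ)}ᶜ)
      (nhdsWithin (0:ℝ) {(0:ℝ)}ᶜ) := by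
    rw [nhdsWithin]
    refine Filter.Tendsto.inf ?_ ?_
    · simpa using (continuous_neg.tendsto (0:ℝ))
    · rw [Filter.tendsto_principal_principal]
      intro x hx
      simpa using hx
  have hslopeneg : Filter.Tendsto (fun z : ℝ => u (-z) / (-z)) (nhdsWithin 0 {(0:ℝ)}ᶜ)
      (nhds L) := hslope.comp hneg
  -- h z / z^2 → -1
  have hprod : Filter.Tendsto (fun z : ℝ => u z * u (-z) / z ^ 2) (nhdsWithin 0 {(0:ℝ)}ᶜ)
      (nhds (-1)) := by
    have h1 := (hslope.mul hslopeneg).neg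
    have := h1.congr (fun z => by
      rw [div_mul_div_comm, show z * -z = -(z ^ 2) by ring, div_neg, neg_neg])
    have hval : -(L * L) = -1 := by nlinarith [hLsq]
    rwa [hval] at this
  -- pass to right neighborhood of 0
  have hmono : nhdsWithin (0:ℝ) (Set.Ioi 0) ≤ nhdsWithin (0:ℝ) {(0:ℝ)}ᶜ :=
    nhdsWithin_mono _ (fun x hx => ne_of_gt hx)
  have hprod' : Filter.Tendsto (fun z : ℝ => u z * u (-z) / z ^ 2)
      (nhdsWithin (0:ℝ) (Set.Ioi 0)) (nhds (-1)) := hprod.mono_left hmono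
  have hev : ∀ᶠ z in nhdsWithin (0:ℝ) (Set.Ioi 0), u z * u (-z) / z ^ 2 < 0 :=
    hprod'.eventually_lt_const (by norm_num)
  have hev1 : ∀ᶠ z in nhdsWithin (0:ℝ) (Set.Ioi 0), z < 1 := by
    apply eventually_nhdsWithin_of_eventually_nhds
    exact eventually_lt_nhds (by norm_num)
  obtain ⟨z₀, hz₀neg, hz₀lt1, hz₀mem⟩ :=
    (hev.and (hev1.and self_mem_nhdsWithin)).exists
  have hz₀pos : (0:ℝ) < z₀ := hz₀mem
  have hhz₀ : u z₀ * u (-z₀) < 0 := by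
    have hsqpos : (0:ℝ) < z₀ ^ 2 := pow_pos hz₀pos 2
    have h := mul_neg_of_neg_of_pos hz₀neg hsqpos
    rwa [div_mul_cancel₀ _ (ne_of_gt hsqpos)] at h
  by_contra hcon
  push_neg at hcon
  have hne : u 1 * u (-1) ≠ 0 := by
    intro h
    have h4 : (u 1 * u (-1)) ^ 2 = 4 := by
      rw [mul_pow, hsq 1, hsq (-1)]; norm_num
    rw [h] at h4; norm_num at h4
  have hpos : 0 < u 1 * u (-1) := lt_of_le_of_ne hcon (Ne.symm hne)
  have hcontH : ContinuousOn (fun z : ℝ => u z * u (-z)) (Set.Icc z₀ 1) :=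
    (hcont.mul (hcont.comp continuous_neg)).continuousOn
  have h0mem : (0:ℝ) ∈ Set.Icc ((fun z : ℝ => u z * u (-z)) z₀)
      ((fun z : ℝ => u z * u (-z)) 1) := ⟨le_of_lt hhz₀, le_of_lt hpos⟩
  obtain ⟨c, hcmem, hc⟩ := intermediate_value_Icc (le_of_lt hz₀lt1) hcontH h0mem
  have hcpos : 0 < c := lt_of_lt_of_le hz₀pos hcmem.1
  have hc2 : (u c * u (-c)) ^ 2 = c ^ 4 * (1 + c ^ 2) ^ 2 := by
    rw [mul_pow, hsq c, hsq (-c)]; ring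
  have hc' : u c * u (-c) = 0 := hc
  rw [hc'] at hc2
  nlinarith [pow_pos hcpos 4, sq_nonneg (1 + c ^ 2)]
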